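/- (Translated sub-configuration rotation numbers agree) Let x : ℤ^d → ℝ be Birkhoff and fix i ∈ ℤ^d. Then for every j ∈ ℤ^d, the one-dimensional sequences n ↦ x_{ni+j} and n ↦ x_{ni} are Birkhoff sequences with the same rotation number; i.e. lim_{n→∞} x_{ni+j}/n = lim_{n→∞} x_{ni}/n. -/

import Mathlib

open scoped BigOperators

/-- The shift operator `(τ_{k,l} x)_i = x_{i+k} + l`. -/
def tau {d : ℕ} (k : Fin d → ℤ) (l : ℤ) (x : (Fin d → ℤ) → ℝ) : (Fin d → ℤ) → ℝ :=
  fun i => x (i + k) + l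

/-- A configuration is Birkhoff if every integer shift is pointwise comparable to it. -/
def IsBirkhoff {d : ℕ} (x : (Fin d → ℤ) → ℝ) : Prop :=
  ∀ (k : Fin d → ℤ) (l : ℤ), tau k l x ≤ x ∨ x ≤ tau k l x

/-- `x` has rotation vector `ω` : `lim_{n→∞} x_{ni}/n = ⟨ω,i⟩` for all `i`. -/
def HasRotVec {d : ℕ} (x : (Fin d → ℤ) → ℝ) (ω : Fin d → ℝ) : Prop :=
  ∀ i : Fin d → ℤ, Filter.Tendsto (fun n : ℕ => x ((n : ℤ) • i) / n) Filter.atTop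
    (nhds (∑ k, ω k * (i k : ℝ)))


/-- A bi-infinite sequence is Birkhoff if all its integer shifts are comparable to it. -/
def BirkhoffSeq (a : ℤ → ℝ) : Prop :=
  ∀ k l : ℤ, (∀ n, a (n + k) + l ≤ a n) ∨ (∀ n, a n ≤ a (n + k) + l)

/-- If a real-valued function is, for every integer `m`, either everywhere `≤ m`
or everywhere `≥ m`, then its oscillation is at most `1`. -/
lemma osc_le_one {α : Type*} (f : α → ℝ)
    (h : ∀ m : ℤ, (∀ p, f p ≤ m) ∨ (∀ p, (m : ℝ) ≤ f p)) :
    ∀ p q, f p ≤ f q + 1 := by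
  intro p q
  by_contra hc
  push_neg at hc
  rcases h (⌊f q⌋ + 1) with h1 | h1
  · have h2 : ((⌊f q⌋ + 1 : ℤ) : ℝ) ≤ f q + 1 := by
      push_cast; linarith [Int.floor_le (f q)]
    have := h1 p
    linarith
  · have h2 : f q < ((⌊f q⌋ + 1 : ℤ) : ℝ) := by
      push_cast; linarith [Int.lt_floor_add_one (f q)]
    have := h1 q
    linarith

lemma key_osc {d : ℕ} (x : (Fin d → ℤ) → ℝ) (hx : IsBirkhoff x) (k : Fin d → ℤ) :
    ∀ p q, x (p + k) - x p ≤ x (q + k) - x q + 1 := by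
  apply osc_le_one
  intro m
  rcases hx k (-m) with h | h
  · left
    intro p
    have := h p
    simp only [tau] at this
    push_cast at this ⊢
    linarith
  · right
    intro p
    have := h p
    simp only [tau] at this
    push_cast at this ⊢
    linarith

theorem stmt18 {d : ℕ} (x : (Fin d → ℤ) → ℝ) (hx : IsBirkhoff x)
    (i j : Fin d → ℤ) :
    BirkhoffSeq (fun n : ℤ => x (n • i + j)) ∧
    BirkhoffSeq (fun n : ℤ => x (n • i)) ∧
    ∃ ω : ℝ,
      Filter.Tendsto (fun n : ℕ => x ((n : ℤ) • i + j) / n) Filter.atTop (nhds ω) ∧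
      Filter.Tendsto (fun n : ℕ => x ((n : ℤ) • i) / n) Filter.atTop (nhds ω) := by
  have key := key_osc x hx
  -- a general Birkhoff-sequence lemma
  have birk : ∀ j' : Fin d → ℤ, BirkhoffSeq (fun n : ℤ => x (n • i + j')) := by
    intro j' k l
    have harg : ∀ n : ℤ, (n + k) • i + j' = (n • i + j') + k • i := by
      intro n; funext t; simp [add_smul]; ring
    rcases hx (k • i) l with h | h
    · left
      intro n
      have := h (n • i + j')
      simp only [tau] at this
      show x ((n + k) • i + j') + (l : ℝ) ≤ x (n • i + j')
      rw [harg n]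
      exact this
    · right
      intro n
      have := h (n • i + j')
      simp only [tau] at this
      show x (n • i + j') ≤ x ((n + k) • i + j') + (l : ℝ)
      rw [harg n]
      exact this
  refine ⟨birk j, ?_, ?_⟩
  · have := birk 0
    simpa using this
  -- convergence
  set u : ℕ → ℝ := fun n => x ((n : ℤ) • i) with hu
  have hcast : ∀ m n : ℕ, ((m + n : ℕ) : ℤ) • i = (m : ℤ) • i + (n : ℤ) • i := by
    intro m n; push_cast; rw [add_smul]
  have hsub : Subadditive (fun n => u n - u 0 + 1) := by
    intro m n
    have h := key ((n : ℤ) • i) ((m : ℤ) • i) 0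
    rw [zero_add] at h
    have e : ((m + n : ℕ) : ℤ) • i = (m : ℤ) • i + (n : ℤ) • i := hcast m n
    simp only [hu]
    rw [e]
    have e0 : ((0 : ℕ) : ℤ) • i = (0 : Fin d → ℤ) := by simp
    rw [e0]
    linarith
  have hlow : ∀ n : ℕ, u 0 + (n : ℝ) * (u 1 - u 0 - 1) ≤ u n := by
    intro n
    induction n with
    | zero => simp
    | succ n ih =>
      have h := key ((1 : ℤ) • i) 0 ((n : ℤ) • i)
      rw [zero_add] at h
      have e : ((n + 1 : ℕ) : ℤ) • i = (n : ℤ) • i + (1 : ℤ) • i := hcast n 1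
      have e0 : ((0 : ℕ) : ℤ) • i = (0 : Fin d → ℤ) := by simp
      have e1 : ((1 : ℕ) : ℤ) • i = (1 : ℤ) • i := by norm_num
      have eu1 : u (n + 1) = x ((n : ℤ) • i + (1 : ℤ) • i) := by
        simp only [hu]
        congr 1
      have e1' : u 1 = x ((1 : ℤ) • i) := by
        simp only [hu]
        norm_num
      have e0' : u 0 = x 0 := by
        simp only [hu]
        norm_num
      have hstep : u 1 + u n - u 0 - 1 ≤ u (n + 1) := by
        rw [eu1, e1', e0']
        have hn' : u n = x ((n : ℤ) • i) := rfl
        rw [hn']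
        linarith
      push_cast
      nlinarith [hstep]
  have hbdd : BddBelow (Set.range fun n : ℕ => (u n - u 0 + 1) / n) := by
    refine ⟨min 0 (u 1 - u 0 - 1), ?_⟩
    rintro _ ⟨n, rfl⟩
    rcases Nat.eq_zero_or_pos n with h0 | hpos
    · subst h0; simp
    · have hn : (0 : ℝ) < n := by exact_mod_cast hpos
      rw [le_div_iff₀ hn]
      have h1 := hlow n
      have h2 : min 0 (u 1 - u 0 - 1) ≤ u 1 - u 0 - 1 := min_le_right _ _
      have h3 : min 0 (u 1 - u 0 - 1) * n ≤ (u 1 - u 0 - 1) * n :=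
        mul_le_mul_of_nonneg_right h2 (le_of_lt hn)
      nlinarith
  have hU : Filter.Tendsto (fun n : ℕ => u n / n) Filter.atTop (nhds hsub.lim) := by
    have h1 := hsub.tendsto_lim hbdd
    have h2 : Filter.Tendsto (fun n : ℕ => (u 0 - 1) / n) Filter.atTop (nhds 0) :=
      tendsto_const_div_atTop_nhds_zero_nat _
    have h3 := h1.add h2
    rw [add_zero] at h3
    refine h3.congr fun n => ?_
    rw [← add_div]
    ring_nf
  have hdiffbd : ∀ p, |x (p + j) - x p - (x j - x 0)| ≤ 1 := by
    intro p
    rw [abs_le]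
    constructor
    · have := key j 0 p
      rw [zero_add] at this
      linarith
    · have := key j p 0
      rw [zero_add] at this
      linarith
  have hd0 : Filter.Tendsto (fun n : ℕ => (x ((n : ℤ) • i + j) - u n) / n)
      Filter.atTop (nhds 0) := by
    apply squeeze_zero_norm (a := fun n : ℕ => (|x j - x 0| + 1) / n)
    · intro n
      rw [Real.norm_eq_abs, abs_div, Nat.abs_cast]
      rcases Nat.eq_zero_or_pos n with h0 | hpos
      · subst h0; simp
      · have hn : (0 : ℝ) < n := by exact_mod_cast hpos
        apply div_le_div_of_nonneg_right ?_ hn.le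
        have h1 := hdiffbd ((n : ℤ) • i)
        have h2 : u n = x ((n : ℤ) • i) := rfl
        rw [h2]
        have := abs_abs_sub_abs_le_abs_sub (x ((n : ℤ) • i + j)) (x ((n : ℤ) • i))
        calc |x ((n : ℤ) • i + j) - x ((n : ℤ) • i)|
            ≤ |x ((n : ℤ) • i + j) - x ((n : ℤ) • i) - (x j - x 0)| + |x j - x 0| := by
              have := abs_sub_abs_le_abs_sub (x ((n : ℤ) • i + j) - x ((n : ℤ) • i)) (x j - x 0)
              have h3 := abs_add_le (x ((n : ℤ) • i + j) - x ((n : ℤ) • i) - (x j - x 0)) (x j - x 0)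
              calc |x ((n : ℤ) • i + j) - x ((n : ℤ) • i)|
                  = |(x ((n : ℤ) • i + j) - x ((n : ℤ) • i) - (x j - x 0)) + (x j - x 0)| := by ring_nf
                _ ≤ _ := h3
          _ ≤ |x j - x 0| + 1 := by linarith
    · exact tendsto_const_div_atTop_nhds_zero_nat _
  refine ⟨hsub.lim, ?_, hU⟩
  have := hU.add hd0
  rw [add_zero] at this
  refine this.congr fun n => ?_
  rw [← add_div]
  ring_nf
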